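/- Let A = √i ∈ ℂ (A² = i). For any nonzero integer n with σ = n/|n|, we have i · (A^{-2σ} Σ_{k=0}^{|n|-1} (-A^{-4σ})^k + 1) = n + i. That is, the conductance of the elementary tangle [n¹] (n classical crossings plus one virtual crossing) equals n + i. -/
import Mathlib


open Complex in
/-- The conductance of the elementary tangle `[n¹]` (n classical crossings plus one
virtual crossing) equals `n + i`: with `A² = i` and `σ = n.sign`,
`i * (A^(-2σ) * ∑_{k=0}^{|n|-1} (-A^(-4σ))^k + 1) = n + i`. -/
theorem conductance_elementary_virtual (A : ℂ) (hA : A ^ 2 = I) (n : ℤ) (hn : n ≠ 0) :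
    I * (A ^ (-2 * n.sign) *
      (∑ k ∈ Finset.range n.natAbs, (-A ^ (-(4 * n.sign))) ^ k) + 1) = (n : ℂ) + I := by
  have hA0 : A ≠ 0 := by
    intro h; rw [h] at hA; simp at hA; exact I_ne_zero hA.symm
  have hA2 : A ^ (2 : ℤ) = I := by rw [zpow_ofNat]; exact_mod_cast hA
  have hA4 : A ^ (4 : ℤ) = -1 := by
    have : A ^ (4 : ℤ) = (A ^ (2 : ℤ)) ^ (2 : ℤ) := by rw [← zpow_mul]; norm_num
    rw [this, hA2]; simp [zpow_ofNat, I_sq]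
  rcases lt_or_gt_of_ne hn with h | h
  · have hs : n.sign = -1 := Int.sign_eq_neg_one_of_neg h
    have hna : (n.natAbs : ℂ) = -(n : ℂ) := by
      have h' : (n.natAbs : ℤ) = -n := by omega
      have := congrArg (fun z : ℤ => (z : ℂ)) h'
      simp only [Int.cast_natCast, Int.cast_neg] at this
      exact this
    rw [hs]
    norm_num [hA4, hA2, hna]
    linear_combination (-(n:ℂ)) * I_sq
  · have hs : n.sign = 1 := Int.sign_eq_one_of_pos h
    have hna : (n.natAbs : ℂ) = (n : ℂ) := by
      have h' : (n.natAbs : ℤ) = n := by omega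
      have := congrArg (fun z : ℤ => (z : ℂ)) h'
      simp only [Int.cast_natCast, Int.cast_neg] at this
      exact this
    rw [hs]
    have h2 : A ^ (-2 * (1:ℤ)) = -I := by
      rw [show (-2 * (1:ℤ)) = -2 by ring, zpow_neg, hA2, inv_I]
    have h4 : A ^ (-(4 * (1:ℤ))) = -1 := by
      rw [show (-(4 * (1:ℤ))) = -4 by ring, zpow_neg, hA4]; norm_num
    rw [h2, h4]
    norm_num [hna]
    linear_combination (-(n:ℂ)) * I_sq
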